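/- Fix real numbers k > 0 and θ with 0 < θ ≤ 1. For all s with 0 < s ≤ 1 and θ s > k, the derivative of the marginal prompting effect P(s) = (k/(θ² s)) · (1 - ln(θ s / k)) with respect to user skill s equals (k/(θ² s²)) · (ln(θ s / k) - 2). In particular, if additionally θ s > e² · k, then this derivative is strictly positive: as user skill increases, the marginal prompting effect becomes larger. -/

import Mathlib

/-- For all s with 0 < s ≤ 1 and θ s > k, the derivative in s of the
marginal prompting effect P(s) = (k/(θ² s)) · (1 - ln(θ s / k)) equals
(k/(θ² s²)) · (ln(θ s / k) - 2); if additionally θ s > e² · k, this derivative is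
strictly positive. -/
theorem stmt_16 (k θ : ℝ) (hk : 0 < k) (hθ0 : 0 < θ) (hθ1 : θ ≤ 1) :
    ∀ s : ℝ, 0 < s → s ≤ 1 → k < θ * s →
      HasDerivAt (fun s' : ℝ => (k / (θ ^ 2 * s')) * (1 - Real.log (θ * s' / k)))
          ((k / (θ ^ 2 * s ^ 2)) * (Real.log (θ * s / k) - 2)) s ∧
        (Real.exp 2 * k < θ * s →
          0 < (k / (θ ^ 2 * s ^ 2)) * (Real.log (θ * s / k) - 2)) := by
  intro s hs hs1 hks
  have hθs : 0 < θ * s := lt_trans hk hks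
  have hθ2 : (0:ℝ) < θ ^ 2 := by positivity
  constructor
  · -- derivative computation
    have h1 : HasDerivAt (fun s' : ℝ => k / (θ ^ 2 * s'))
        (-(k / θ ^ 2) / s ^ 2) s := by
      have : HasDerivAt (fun s' : ℝ => (k / θ ^ 2) * s'⁻¹)
          ((k / θ ^ 2) * (-(s ^ 2)⁻¹)) s :=
        (hasDerivAt_inv hs.ne').const_mul (k / θ ^ 2)
      convert this using 1
      · funext s'; ring
      · ring
    have h2 : HasDerivAt (fun s' : ℝ => 1 - Real.log (θ * s' / k)) (-(1 / s)) s := by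
      have hinner : HasDerivAt (fun s' : ℝ => θ * s' / k) (θ / k) s := by
        simpa using ((hasDerivAt_id s).const_mul θ).div_const k
      have hlog : HasDerivAt (fun s' : ℝ => Real.log (θ * s' / k))
          ((θ * s / k)⁻¹ * (θ / k)) s :=
        (Real.hasDerivAt_log (by positivity)).comp s hinner
      have : HasDerivAt (fun s' : ℝ => 1 - Real.log (θ * s' / k))
          (0 - (θ * s / k)⁻¹ * (θ / k)) s := (hasDerivAt_const s 1).sub hlog
      convert this using 1
      field_simp
      ring
    have := (h1.mul h2 : HasDerivAt (fun s' : ℝ => (k / (θ ^ 2 * s')) * (1 - Real.log (θ * s' / k))) _ s)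
    refine this.congr_deriv ?_
    field_simp
    ring
  · intro he
    have hlog : 2 < Real.log (θ * s / k) := by
      have : Real.exp 2 < θ * s / k := by
        rw [lt_div_iff₀ hk]; exact he
      calc 2 = Real.log (Real.exp 2) := (Real.log_exp 2).symm
        _ < Real.log (θ * s / k) := Real.log_lt_log (Real.exp_pos 2) this
    have : 0 < Real.log (θ * s / k) - 2 := by linarith
    positivity
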